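/- Let R ⊆ α × β and S ⊆ β × γ be finite relations. Let (a_1 ≥ a_2 ≥ ⋯) be the degrees deg'_{R,β}(y) = |{x : (x,y) ∈ R}| listed in decreasing order (extended by zeros), and let (b_1 ≥ b_2 ≥ ⋯) be the degrees deg_{S,β}(y) = |{z : (y,z) ∈ S}| listed in decreasing order (extended by zeros). Then the two-way join satisfies |{(x,y,z) : (x,y) ∈ R, (y,z) ∈ S}| ≤ Σ_i a_i · b_i. (The size of the join is Σ_y deg'_{R,β}(y) · deg_{S,β}(y), which by the rearrangement inequality is at most the sum of the products of the sorted degree sequences.) -/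

import Mathlib

private lemma exists_comp_perm_eq' {n : ℕ} (u v : Fin n → ℕ)
    (h : Finset.univ.val.map u = Finset.univ.val.map v) :
    ∃ σ : Equiv.Perm (Fin n), v ∘ σ = u := by
  have huv : ∀ w : Fin n → ℕ, ∀ σ : Equiv.Perm (Fin n),
      Finset.univ.val.map (w ∘ σ) = Finset.univ.val.map w := by
    intro w σ
    have : (Finset.univ.val.map (σ : Fin n → Fin n)) = Finset.univ.val := by
      have := Finset.map_univ_equiv σ
      calc Finset.univ.val.map (σ : Fin n → Fin n)
          = (Finset.univ.map σ.toEmbedding).val := rfl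
        _ = Finset.univ.val := by rw [Finset.map_univ_equiv]
    conv_rhs => rw [← this]
    rw [Multiset.map_map]
  have hlist : List.ofFn (u ∘ Tuple.sort u) = List.ofFn (v ∘ Tuple.sort v) := by
    refine (fun hp h1 h2 => List.Perm.eq_of_pairwise' (r := (· ≤ ·)) h1 h2 hp) ?_ ?_ ?_
    · apply Multiset.coe_eq_coe.mp
      calc (↑(List.ofFn (u ∘ Tuple.sort u)) : Multiset ℕ)
          = Finset.univ.val.map (u ∘ Tuple.sort u) := (Fin.univ_val_map _).symm
        _ = Finset.univ.val.map u := huv u _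
        _ = Finset.univ.val.map v := h
        _ = Finset.univ.val.map (v ∘ Tuple.sort v) := (huv v _).symm
        _ = ↑(List.ofFn (v ∘ Tuple.sort v)) := Fin.univ_val_map _
    · rw [List.pairwise_iff_get]
      intro i j hij
      simp only [List.get_ofFn]
      exact Tuple.monotone_sort u (by simpa using hij.le)
    · rw [List.pairwise_iff_get]
      intro i j hij
      simp only [List.get_ofFn]
      exact Tuple.monotone_sort v (by simpa using hij.le)
  have hfn : u ∘ Tuple.sort u = v ∘ Tuple.sort v := List.ofFn_injective hlist
  refine ⟨(Tuple.sort v) * (Tuple.sort u)⁻¹, ?_⟩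
  funext i
  have := congrFun hfn ((Tuple.sort u)⁻¹ i)
  simpa using this.symm

private lemma sorted_dot_bound' {n : ℕ} (u v f g : Fin n → ℕ)
    (hf : Antitone f) (hg : Antitone g)
    (hu : Finset.univ.val.map u = Finset.univ.val.map f)
    (hv : Finset.univ.val.map v = Finset.univ.val.map g) :
    ∑ i, u i * v i ≤ ∑ i, f i * g i := by
  obtain ⟨σ, hσ⟩ := exists_comp_perm_eq' u f hu
  obtain ⟨τ, hτ⟩ := exists_comp_perm_eq' v g hv
  have hmono : Monovary f g := by
    intro i j hij
    have hji : j ≤ i := by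
      by_contra hc
      exact absurd (hg (le_of_not_ge hc)) (not_le.mpr hij)
    exact hf hji
  calc ∑ i, u i * v i = ∑ i, f (σ i) * g (τ i) := by
        rw [← hσ, ← hτ]; rfl
    _ = ∑ j, f j * g (τ (σ⁻¹ j)) := by
        rw [← Equiv.sum_comp σ (fun j => f j * g (τ (σ⁻¹ j)))]
        simp
    _ = ∑ j, f j * g ((τ * σ⁻¹) j) := rfl
    _ ≤ ∑ j, f j * g j := hmono.sum_mul_comp_perm_le_sum_mul (σ := τ * σ⁻¹)

/-- The two-way join is bounded by the dot product of the sorted (decreasing) degree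
sequences: `|R ⋈ S| ≤ Σ_i a_i · b_i`, where `(a_i)` lists the degrees
`deg'_{R,β}(y) = |{x : (x,y) ∈ R}|` in decreasing order and `(b_i)` lists the degrees
`deg_{S,β}(y) = |{z : (y,z) ∈ S}|` in decreasing order (both extended by zeros). -/
theorem two_way_join_sorted_degree_bound {α β γ : Type*}
    [Fintype α] [Fintype β] [Fintype γ]
    [DecidableEq α] [DecidableEq β] [DecidableEq γ]
    (R : Finset (α × β)) (S : Finset (β × γ)) :
    let A : List ℕ :=
      Multiset.sort
        (Finset.univ.val.map fun y : β => (R.filter (fun t => t.2 = y)).card) (· ≥ ·)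
    let B : List ℕ :=
      Multiset.sort
        (Finset.univ.val.map fun y : β => (S.filter (fun t => t.1 = y)).card) (· ≥ ·)
    (Finset.univ.filter
        (fun t : α × β × γ => (t.1, t.2.1) ∈ R ∧ (t.2.1, t.2.2) ∈ S)).card
      ≤ ∑ i ∈ Finset.range (Fintype.card β), A.getD i 0 * B.getD i 0 := by
  intro A B
  set a : β → ℕ := fun y => (R.filter (fun t => t.2 = y)).card with ha
  set b : β → ℕ := fun y => (S.filter (fun t => t.1 = y)).card with hb
  set n := Fintype.card β with hn
  -- Step 1: the join count is ∑ y, a y * b y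
  have hcount : (Finset.univ.filter
      (fun t : α × β × γ => (t.1, t.2.1) ∈ R ∧ (t.2.1, t.2.2) ∈ S)).card
      = ∑ y : β, a y * b y := by
    rw [Finset.card_eq_sum_card_fiberwise
      (f := fun t : α × β × γ => t.2.1) (t := Finset.univ) (fun x _ => Finset.mem_univ _)]
    refine Finset.sum_congr rfl fun y _ => ?_
    rw [ha, hb]
    dsimp only
    rw [← Finset.card_product]
    apply Finset.card_nbij' (i := fun t : α × β × γ => ((t.1, t.2.1), (t.2.1, t.2.2)))
      (j := fun p : (α × β) × (β × γ) => (p.1.1, y, p.2.2))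
    · intro t ht
      simp only [Finset.mem_coe, Finset.mem_filter, Finset.mem_univ, true_and] at ht
      simp only [Finset.mem_coe, Finset.mem_product, Finset.mem_filter]
      exact ⟨⟨ht.1.1, ht.2⟩, ⟨ht.1.2, ht.2⟩⟩
    · intro p hp
      simp only [Finset.mem_coe, Finset.mem_product, Finset.mem_filter] at hp
      simp only [Finset.mem_coe, Finset.mem_filter, Finset.mem_univ, true_and]
      refine ⟨⟨?_, ?_⟩, trivial⟩
      · have h := hp.1.1
        rw [show p.1 = (p.1.1, p.1.2) from rfl, hp.1.2] at h
        exact h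
      · have h := hp.2.1
        rw [show p.2 = (p.2.1, p.2.2) from rfl, hp.2.2] at h
        exact h
    · intro t ht
      simp only [Finset.mem_coe, Finset.mem_filter, Finset.mem_univ, true_and] at ht
      obtain ⟨x, y1, z⟩ := t
      obtain ⟨-, rfl⟩ := ht
      rfl
    · intro p hp
      simp only [Finset.mem_coe, Finset.mem_product, Finset.mem_filter] at hp
      obtain ⟨⟨x, y1⟩, y2, z⟩ := p
      obtain ⟨⟨-, h1⟩, -, h2⟩ := hp
      dsimp only at h1 h2 ⊢
      subst h1; subst h2
      rfl
  rw [hcount]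
  -- set up functions on Fin n
  have e : β ≃ Fin n := Fintype.equivFin β
  have hAlen : A.length = n := by
    simp [A, Multiset.length_sort, hn]
  have hBlen : B.length = n := by
    simp [B, Multiset.length_sort, hn]
  set fA : Fin n → ℕ := fun i => A.getD i 0 with hfA
  set fB : Fin n → ℕ := fun i => B.getD i 0 with hfB
  have hgetA : ∀ i : Fin n, fA i = A.get ⟨i, by rw [hAlen]; exact i.2⟩ := by
    intro i
    have hi : (i : ℕ) < A.length := by rw [hAlen]; exact i.2
    simp [hfA, List.getD_eq_getElem?_getD, List.getElem?_eq_getElem hi, List.get_eq_getElem]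
  have hgetB : ∀ i : Fin n, fB i = B.get ⟨i, by rw [hBlen]; exact i.2⟩ := by
    intro i
    have hi : (i : ℕ) < B.length := by rw [hBlen]; exact i.2
    simp [hfB, List.getD_eq_getElem?_getD, List.getElem?_eq_getElem hi, List.get_eq_getElem]
  have hAsorted : A.Pairwise (· ≥ ·) := Multiset.pairwise_sort _ _
  have hBsorted : B.Pairwise (· ≥ ·) := Multiset.pairwise_sort _ _
  have hfAanti : Antitone fA := by
    intro i j hij
    rw [hgetA i, hgetA j]
    exact hAsorted.rel_get_of_le (by simpa using hij)
  have hfBanti : Antitone fB := by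
    intro i j hij
    rw [hgetB i, hgetB j]
    exact hBsorted.rel_get_of_le (by simpa using hij)
  have hofA : List.ofFn fA = A := by
    apply List.ext_get (by simp [hAlen])
    intro i h1 h2
    simp only [List.get_ofFn]
    rw [hgetA]
    exact congrArg A.get (Fin.ext rfl)
  have hofB : List.ofFn fB = B := by
    apply List.ext_get (by simp [hBlen])
    intro i h1 h2
    simp only [List.get_ofFn]
    rw [hgetB]
    exact congrArg B.get (Fin.ext rfl)
  have hmapA : Finset.univ.val.map (a ∘ e.symm) = Finset.univ.val.map fA := by
    have h1 : Finset.univ.val.map fA = ↑A := by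
      rw [Fin.univ_val_map, hofA]
    have h2 : (↑A : Multiset ℕ) = Finset.univ.val.map a := Multiset.sort_eq _ _
    have h3 : Finset.univ.val.map (a ∘ e.symm) = Finset.univ.val.map a := by
      have : (Finset.univ.val.map (e.symm : Fin n → β)) = Finset.univ.val := by
        calc Finset.univ.val.map (e.symm : Fin n → β)
            = (Finset.univ.map e.symm.toEmbedding).val := rfl
          _ = Finset.univ.val := by rw [Finset.map_univ_equiv]
      conv_rhs => rw [← this]
      rw [Multiset.map_map]
    rw [h3, h1, h2]
  have hmapB : Finset.univ.val.map (b ∘ e.symm) = Finset.univ.val.map fB := by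
    have h1 : Finset.univ.val.map fB = ↑B := by
      rw [Fin.univ_val_map, hofB]
    have h2 : (↑B : Multiset ℕ) = Finset.univ.val.map b := Multiset.sort_eq _ _
    have h3 : Finset.univ.val.map (b ∘ e.symm) = Finset.univ.val.map b := by
      have : (Finset.univ.val.map (e.symm : Fin n → β)) = Finset.univ.val := by
        calc Finset.univ.val.map (e.symm : Fin n → β)
            = (Finset.univ.map e.symm.toEmbedding).val := rfl
          _ = Finset.univ.val := by rw [Finset.map_univ_equiv]
      conv_rhs => rw [← this]
      rw [Multiset.map_map]
    rw [h3, h1, h2]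
  have key := sorted_dot_bound' (a ∘ e.symm) (b ∘ e.symm) fA fB hfAanti hfBanti hmapA hmapB
  calc ∑ y : β, a y * b y
      = ∑ i : Fin n, a (e.symm i) * b (e.symm i) := by
        rw [← Equiv.sum_comp e.symm (fun y => a y * b y)]
    _ ≤ ∑ i : Fin n, fA i * fB i := key
    _ = ∑ i ∈ Finset.range n, A.getD i 0 * B.getD i 0 := by
        rw [Finset.sum_range fun i => A.getD i 0 * B.getD i 0]
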